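/- Let Σ, Σ₀ be symmetric positive definite n×n matrices, T > 0, G(t) = (Σ + Σ₀t)⁻¹Σ₀, and Θ(t) = −((Σ₀⁻¹ + Σ⁻¹T)⁻¹ + 2∫_t^T G(s)ᵀΣG(s) ds). Then Θ(t)Σ₀⁻¹Σ = ΣΣ₀⁻¹Θ(t) for all t ∈ [0,T]. -/

import Mathlib

open Matrix intervalIntegral

attribute [local instance] Matrix.normedAddCommGroup Matrix.normedSpace

/-- `G(t) = (Σ + Σ₀t)⁻¹ Σ₀`. -/
noncomputable def stmt15G (n : ℕ) (Sig Sig₀ : Matrix (Fin n) (Fin n) ℝ) (t : ℝ) :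
    Matrix (Fin n) (Fin n) ℝ :=
  (Sig + t • Sig₀)⁻¹ * Sig₀

/-- `Θ(t) = −((Σ₀⁻¹ + Σ⁻¹T)⁻¹ + 2∫_t^T G(s)ᵀ Σ G(s) ds)`. -/
noncomputable def stmt15Θ (n : ℕ) (Sig Sig₀ : Matrix (Fin n) (Fin n) ℝ) (T t : ℝ) :
    Matrix (Fin n) (Fin n) ℝ :=
  -((Sig₀⁻¹ + T • Sig⁻¹)⁻¹ +
      (2:ℝ) • ∫ s in t..T, (stmt15G n Sig Sig₀ s)ᵀ * Sig * stmt15G n Sig Sig₀ s)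

section aux

variable {n : ℕ} {Sig Sig₀ : Matrix (Fin n) (Fin n) ℝ}

lemma stmt15_symm (h : Sig.PosDef) : Sigᵀ = Sig := by
  have := h.isHermitian.eq
  simpa [Matrix.conjTranspose_eq_transpose_of_trivial] using this

lemma stmt15_smul_psd {s : ℝ} (hs : 0 ≤ s) (h : Sig₀.PosSemidef) : (s • Sig₀).PosSemidef := by
  refine ⟨?_, fun x => ?_⟩
  · have := h.1.eq
    rw [Matrix.IsHermitian, Matrix.conjTranspose_smul]
    rw [this]; simp
  · exact (h.smul hs).2 x

lemma stmt15_sum_posdef (hSig : Sig.PosDef) (hSig₀ : Sig₀.PosDef) {s : ℝ} (hs : 0 ≤ s) :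
    (Sig + s • Sig₀).PosDef :=
  hSig.add_posSemidef (stmt15_smul_psd hs hSig₀.posSemidef)

/-- `Σ (Σ + sΣ₀)⁻¹ Σ₀` is symmetric (for every `s`). -/
lemma stmt15_key (hSig : Sig.PosDef) (hSig₀ : Sig₀.PosDef) (s : ℝ) :
    Sig * (Sig + s • Sig₀)⁻¹ * Sig₀ = Sig₀ * (Sig + s • Sig₀)⁻¹ * Sig := by
  set B := Sig + s • Sig₀ with hB
  have hBt : Bᵀ = B := by
    rw [hB, Matrix.transpose_add, Matrix.transpose_smul, stmt15_symm hSig, stmt15_symm hSig₀]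
  by_cases h : IsUnit B.det
  · have iS : Invertible Sig := hSig.isUnit.invertible
    have iS₀ : Invertible Sig₀ := hSig₀.isUnit.invertible
    have iB : Invertible B := B.invertibleOfIsUnitDet h
    have e1 : Sig⁻¹ᵀ = Sig⁻¹ := by rw [Matrix.transpose_nonsing_inv, stmt15_symm hSig]
    have e2 : Sig₀⁻¹ᵀ = Sig₀⁻¹ := by rw [Matrix.transpose_nonsing_inv, stmt15_symm hSig₀]
    have h1 : Sig * B⁻¹ * Sig₀ = (Sig₀⁻¹ * B * Sig⁻¹)⁻¹ := by
      rw [Matrix.mul_inv_rev, Matrix.mul_inv_rev, Matrix.inv_inv_of_invertible,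
        Matrix.inv_inv_of_invertible, ← mul_assoc]
    have ha : Sig⁻¹ * B * Sig₀⁻¹ = Sig₀⁻¹ + s • Sig⁻¹ := by
      simp [hB, mul_add, add_mul, Matrix.smul_mul, Matrix.mul_smul, mul_assoc,
        Matrix.inv_mul_cancel_left_of_invertible, Matrix.mul_inv_cancel_left_of_invertible,
        Matrix.mul_inv_of_invertible, Matrix.inv_mul_of_invertible]
    have hb : Sig₀⁻¹ * B * Sig⁻¹ = Sig₀⁻¹ + s • Sig⁻¹ := by
      simp [hB, mul_add, add_mul, Matrix.smul_mul, Matrix.mul_smul, mul_assoc,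
        Matrix.inv_mul_cancel_left_of_invertible, Matrix.mul_inv_cancel_left_of_invertible,
        Matrix.mul_inv_of_invertible, Matrix.inv_mul_of_invertible]
    have h2 : (Sig₀⁻¹ * B * Sig⁻¹)ᵀ = Sig₀⁻¹ * B * Sig⁻¹ := by
      rw [Matrix.transpose_mul, Matrix.transpose_mul, e1, e2, hBt, ← mul_assoc,
        ha, hb]
    calc Sig * B⁻¹ * Sig₀
        = (Sig₀⁻¹ * B * Sig⁻¹)⁻¹ := h1
      _ = ((Sig₀⁻¹ * B * Sig⁻¹)ᵀ)⁻¹ := by rw [h2]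
      _ = ((Sig₀⁻¹ * B * Sig⁻¹)⁻¹)ᵀ := (Matrix.transpose_nonsing_inv _).symm
      _ = (Sig * B⁻¹ * Sig₀)ᵀ := by rw [h1]
      _ = Sig₀ * B⁻¹ * Sig := by
          rw [Matrix.transpose_mul, Matrix.transpose_mul, Matrix.transpose_nonsing_inv, hBt,
            stmt15_symm hSig, stmt15_symm hSig₀, ← mul_assoc]
  · rw [Matrix.nonsing_inv_apply_not_isUnit _ h]
    simp

/-- pointwise commutation of the integrand with `Σ₀⁻¹Σ`. -/
lemma stmt15_M_comm (hSig : Sig.PosDef) (hSig₀ : Sig₀.PosDef) (s : ℝ) :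
    (stmt15G n Sig Sig₀ s)ᵀ * Sig * stmt15G n Sig Sig₀ s * (Sig₀⁻¹ * Sig)
      = (Sig * Sig₀⁻¹) * ((stmt15G n Sig Sig₀ s)ᵀ * Sig * stmt15G n Sig Sig₀ s) := by
  have iS : Invertible Sig := hSig.isUnit.invertible
  have iS₀ : Invertible Sig₀ := hSig₀.isUnit.invertible
  set N := (Sig + s • Sig₀)⁻¹ with hN
  have hNt : Nᵀ = N := by
    rw [hN, Matrix.transpose_nonsing_inv, Matrix.transpose_add, Matrix.transpose_smul,
      stmt15_symm hSig, stmt15_symm hSig₀]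
  have hGt : (stmt15G n Sig Sig₀ s)ᵀ = Sig₀ * N := by
    rw [stmt15G, Matrix.transpose_mul, hNt, stmt15_symm hSig₀]
  have key' : Sig * (N * Sig₀) = Sig₀ * (N * Sig) := by
    simpa [mul_assoc] using stmt15_key hSig hSig₀ s
  rw [hGt, stmt15G]
  simp only [mul_assoc, Matrix.mul_inv_cancel_left_of_invertible,
    Matrix.inv_mul_cancel_left_of_invertible, ← hN]
  -- goal : Sig₀ * (N * (Sig * (N * Sig))) = Sig * (N * (Sig * (N * Sig₀)))
  calc Sig₀ * (N * (Sig * (N * Sig)))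
      = Sig₀ * (N * Sig) * (N * Sig) := by rw [mul_assoc, mul_assoc]
    _ = Sig * (N * Sig₀) * (N * Sig) := by rw [key']
    _ = Sig * (N * (Sig₀ * (N * Sig))) := by rw [mul_assoc, mul_assoc]
    _ = Sig * (N * (Sig * (N * Sig₀))) := by rw [key']

lemma ContinuousOn.matrix_transpose' {X : Type*} [TopologicalSpace X]
    {A : X → Matrix (Fin n) (Fin n) ℝ} {S : Set X} (hA : ContinuousOn A S) :
    ContinuousOn (fun x => (A x)ᵀ) S :=
  (continuous_id.matrix_transpose.comp_continuousOn hA)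

lemma stmt15_contOn (hSig : Sig.PosDef) (hSig₀ : Sig₀.PosDef) :
    ContinuousOn
      (fun s => (stmt15G n Sig Sig₀ s)ᵀ * Sig * stmt15G n Sig Sig₀ s)
      (Set.Ici (0:ℝ)) := by
  have hf : Continuous (fun s : ℝ => Sig + s • Sig₀) :=
    continuous_const.add (continuous_id.smul continuous_const)
  have hG : ContinuousOn (fun s => stmt15G n Sig Sig₀ s) (Set.Ici (0:ℝ)) := by
    have hNinv : ContinuousOn (fun s : ℝ => (Sig + s • Sig₀)⁻¹) (Set.Ici (0:ℝ)) := by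
      intro s hs
      have hdet : ((Sig + s • Sig₀).det : ℝ) ≠ 0 :=
        (stmt15_sum_posdef hSig hSig₀ hs).det_pos.ne'
      have h1 : ContinuousAt Ring.inverse ((Sig + s • Sig₀).det) := by
        rw [Ring.inverse_eq_inv']
        exact continuousAt_inv₀ hdet
      have h2 : ContinuousAt (fun s : ℝ => (Sig + s • Sig₀)⁻¹) s :=
        ContinuousAt.comp (continuousAt_matrix_inv _ h1) hf.continuousAt
      exact h2.continuousWithinAt
    exact hNinv.mul continuousOn_const
  exact (hG.matrix_transpose'.mul continuousOn_const).mul hG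

end aux

set_option maxHeartbeats 1600000 in
/-- The symmetry identity `Θ(t)Σ₀⁻¹Σ = ΣΣ₀⁻¹Θ(t)` for all `t ∈ [0,T]`. -/
theorem stmt15 (n : ℕ) (Sig Sig₀ : Matrix (Fin n) (Fin n) ℝ)
    (hSig : Sig.PosDef) (hSig₀ : Sig₀.PosDef) (T : ℝ) (hT : 0 < T) :
    ∀ t ∈ Set.Icc (0:ℝ) T,
      stmt15Θ n Sig Sig₀ T t * Sig₀⁻¹ * Sig = Sig * Sig₀⁻¹ * stmt15Θ n Sig Sig₀ T t := by
  rintro t ⟨ht0, htT⟩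
  have iS : Invertible Sig := hSig.isUnit.invertible
  have iS₀ : Invertible Sig₀ := hSig₀.isUnit.invertible
  set K := Sig₀⁻¹ + T • Sig⁻¹ with hKdef
  have hK : K.PosDef := hSig₀.inv.add_posSemidef (stmt15_smul_psd hT.le hSig.inv.posSemidef)
  have iK : Invertible K := hK.isUnit.invertible
  have hck : (Sig₀⁻¹ * Sig) * K = K * (Sig * Sig₀⁻¹) := by
    simp [hKdef, mul_add, add_mul, Matrix.smul_mul, Matrix.mul_smul, mul_assoc,
      Matrix.mul_inv_of_invertible, Matrix.inv_mul_of_invertible,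
      Matrix.mul_inv_cancel_left_of_invertible, Matrix.inv_mul_cancel_left_of_invertible]
  have hA : K⁻¹ * (Sig₀⁻¹ * Sig) = Sig * (Sig₀⁻¹ * K⁻¹) := by
    calc K⁻¹ * (Sig₀⁻¹ * Sig)
        = K⁻¹ * ((Sig₀⁻¹ * Sig) * K * K⁻¹) := by
          rw [Matrix.mul_inv_cancel_right_of_invertible]
      _ = K⁻¹ * (K * (Sig * Sig₀⁻¹) * K⁻¹) := by rw [hck]
      _ = Sig * (Sig₀⁻¹ * K⁻¹) := by
          simp [mul_assoc, Matrix.inv_mul_cancel_left_of_invertible]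
  -- the integral part
  set M := fun s => (stmt15G n Sig Sig₀ s)ᵀ * Sig * stmt15G n Sig Sig₀ s with hMdef
  letI : ENormedAddMonoid (Matrix (Fin n) (Fin n) ℝ) :=
    NormedAddCommGroup.toENormedAddCommMonoid.toENormedAddMonoid
  have hInt : IntervalIntegrable M MeasureTheory.volume t T := by
    apply ContinuousOn.intervalIntegrable
    apply (stmt15_contOn hSig hSig₀).mono
    rw [Set.uIcc_of_le htT]
    exact fun s hs => le_trans ht0 hs.1
  set I := ∫ s in t..T, M s with hIdef
  have hI : I * (Sig₀⁻¹ * Sig) = Sig * (Sig₀⁻¹ * I) := by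
    have hR : I * (Sig₀⁻¹ * Sig) = ∫ s in t..T, M s * (Sig₀⁻¹ * Sig) := by
      let L : Matrix (Fin n) (Fin n) ℝ →L[ℝ] Matrix (Fin n) (Fin n) ℝ :=
        LinearMap.toContinuousLinearMap (LinearMap.mulRight ℝ (Sig₀⁻¹ * Sig))
      have := L.intervalIntegral_comp_comm hInt (a := t) (b := T)
      rw [hIdef]
      exact this.symm
    have hL : Sig * (Sig₀⁻¹ * I) = ∫ s in t..T, Sig * (Sig₀⁻¹ * M s) := by
      let L : Matrix (Fin n) (Fin n) ℝ →L[ℝ] Matrix (Fin n) (Fin n) ℝ :=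
        LinearMap.toContinuousLinearMap (LinearMap.mulLeft ℝ (Sig * Sig₀⁻¹))
      have := L.intervalIntegral_comp_comm hInt (a := t) (b := T)
      rw [hIdef]
      simp only [← mul_assoc]
      exact this.symm
    rw [hR, hL]
    apply intervalIntegral.integral_congr
    intro s _
    have := stmt15_M_comm (n := n) hSig hSig₀ s
    simpa [hMdef, mul_assoc] using this
  -- assemble
  simp only [stmt15Θ, ← hKdef, ← hMdef, ← hIdef]
  simp only [neg_mul, mul_neg, neg_inj, add_mul, mul_add,
    Matrix.smul_mul, Matrix.mul_smul, mul_assoc]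
  rw [hA, hI]
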